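/- arXiv:1902.05791 — 3 statements merged into one kernel-verified Lean document; each statement's English description precedes it below -/
import Mathlib

section
/- Let p = (p₁,p₂), p' = (p₁',p₂'), q = (q₁,q₂), q' = (q₁',q₂') be points of ℝ². Define a = (p₂'−p₂)/2, b = (p₁−p₁')/2, c = (p₂'+p₂)/2, d = (p₁+p₁')/2, and similarly a' = (q₂'−q₂)/2, b' = (q₁−q₁')/2, c' = (q₂'+q₂)/2, d' = (q₁+q₁')/2. Then ‖p−q‖ = ‖p'−q'‖ if and only if a·c' − b·d' + a'·c − b'·d = a·c − b·d + a'·c' − b'·d'. -/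
/-- **Plücker meeting condition and equal distances.** With the Elekes–Sharir
Plücker coordinates `a = (p₂'−p₂)/2`, `b = (p₁−p₁')/2`, `c = (p₂'+p₂)/2`, `d = (p₁+p₁')/2`
attached to `(p,p')` (and primed versions attached to `(q,q')`), one has
`‖p−q‖ = ‖p'−q'‖` if and only if `ac' − bd' + a'c − b'd = ac − bd + a'c' − b'd'`. -/
theorem dist_eq_iff_plucker_meet (p p' q q' : EuclideanSpace ℝ (Fin 2))
    (a b c d a' b' c' d' : ℝ)
    (ha : a = (p' 1 - p 1) / 2) (hb : b = (p 0 - p' 0) / 2)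
    (hc : c = (p' 1 + p 1) / 2) (hd : d = (p 0 + p' 0) / 2)
    (ha' : a' = (q' 1 - q 1) / 2) (hb' : b' = (q 0 - q' 0) / 2)
    (hc' : c' = (q' 1 + q 1) / 2) (hd' : d' = (q 0 + q' 0) / 2) :
    dist p q = dist p' q' ↔
      a * c' - b * d' + a' * c - b' * d = a * c - b * d + a' * c' - b' * d' := by
  subst ha hb hc hd ha' hb' hc' hd'
  have h1 : dist p q = dist p' q' ↔ dist p q ^ 2 = dist p' q' ^ 2 := by
    constructor
    · intro h; rw [h]
    · intro h
      nlinarith [dist_nonneg (x := p) (y := q), dist_nonneg (x := p') (y := q')]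
  rw [h1, EuclideanSpace.dist_eq, EuclideanSpace.dist_eq,
    Real.sq_sqrt (by positivity), Real.sq_sqrt (by positivity),
    Fin.sum_univ_two, Fin.sum_univ_two]
  simp only [Real.dist_eq, sq_abs]
  constructor <;> intro h <;> nlinarith [h]
end

section
/- There exist absolute constants c, C > 0 such that for every integer M ≥ 2, the number of quadruples (n₁, n₂, n₃, n₄) of integers with 1 ≤ nᵢ ≤ M for each i and n₁·n₄ = n₂·n₃ satisfies c·M²·log M ≤ #{(n₁,n₂,n₃,n₄) : n₁n₄ = n₂n₃, 1 ≤ nᵢ ≤ M} ≤ C·M²·log M. -/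
open Finset

def quadSet (M : ℕ) : Finset (ℕ × ℕ × ℕ × ℕ) :=
  (((Finset.Icc 1 M) ×ˢ (Finset.Icc 1 M) ×ˢ (Finset.Icc 1 M) ×ˢ
      (Finset.Icc 1 M)).filter
      (fun x : ℕ × ℕ × ℕ × ℕ => x.1 * x.2.2.2 = x.2.1 * x.2.2.1))

lemma div_pairs_card (N d : ℕ) (hd : 1 ≤ d) :
    ((((Finset.Icc 1 N) ×ˢ (Finset.Icc 1 N)).filter
      (fun p : ℕ × ℕ => d ∣ p.1 ∧ d ∣ p.2)).card) ≤ (N / d) ^ 2 := by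
  have : (N / d) ^ 2 = ((Finset.Icc 1 (N / d)) ×ˢ (Finset.Icc 1 (N / d))).card := by
    simp [Nat.card_Icc, sq]
  rw [this]
  apply Finset.card_le_card_of_injOn (fun p => (p.1 / d, p.2 / d))
  · intro p hp
    simp only [Finset.mem_coe, Finset.mem_filter, Finset.mem_product, Finset.mem_Icc] at hp ⊢
    obtain ⟨⟨⟨h1, h2⟩, h3, h4⟩, hd1, hd2⟩ := hp
    refine ⟨⟨?_, ?_⟩, ?_, ?_⟩
    · exact Nat.one_le_div_iff hd |>.mpr (Nat.le_of_dvd h1 hd1)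
    · exact Nat.div_le_div_right h2
    · exact Nat.one_le_div_iff hd |>.mpr (Nat.le_of_dvd h3 hd2)
    · exact Nat.div_le_div_right h4
  · intro p hp q hq hpq
    simp only [Finset.mem_coe, Finset.mem_filter] at hp hq
    obtain ⟨-, hp1, hp2⟩ := hp
    obtain ⟨-, hq1, hq2⟩ := hq
    have e1 : p.1 / d = q.1 / d := congrArg Prod.fst hpq
    have e2 : p.2 / d = q.2 / d := congrArg Prod.snd hpq
    have f1 : p.1 = q.1 := by
      rw [← Nat.div_mul_cancel hp1, ← Nat.div_mul_cancel hq1, e1]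
    have f2 : p.2 = q.2 := by
      rw [← Nat.div_mul_cancel hp2, ← Nat.div_mul_cancel hq2, e2]
    exact Prod.ext f1 f2

lemma inv_sq_sum_le (N : ℕ) : ∑ d ∈ Finset.Icc 2 N, ((d : ℝ) ^ 2)⁻¹ ≤ 3 / 4 := by
  rcases lt_or_ge N 2 with h | h
  · rw [Finset.Icc_eq_empty (by omega)]
    norm_num
  · have : Finset.Icc 2 N = insert 2 (Finset.Ioc 2 N) := by
      rw [Finset.Ioc_insert_left h]
    rw [this, Finset.sum_insert (by simp)]
    have h2 := sum_Ioc_inv_sq_le_sub (α := ℝ) (k := 2) (n := N) (by norm_num) h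
    have hN : (0:ℝ) ≤ (N : ℝ)⁻¹ := by positivity
    norm_num at h2 ⊢
    linarith

lemma coprime_pairs_card (N : ℕ) :
    (N : ℝ) ^ 2 / 4 ≤
      ((((Finset.Icc 1 N) ×ˢ (Finset.Icc 1 N)).filter
        (fun p : ℕ × ℕ => Nat.gcd p.1 p.2 = 1)).card : ℝ) := by
  set T := (Finset.Icc 1 N) ×ˢ (Finset.Icc 1 N) with hT
  have hcardT : T.card = N ^ 2 := by
    simp [hT, Nat.card_Icc, sq]
  have hsplit := Finset.card_filter_add_card_filter_not
    (s := T) (p := fun p : ℕ × ℕ => Nat.gcd p.1 p.2 = 1)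
  have hnc : (T.filter (fun p : ℕ × ℕ => ¬ Nat.gcd p.1 p.2 = 1)).card ≤
      ∑ d ∈ Finset.Icc 2 N, (N / d) ^ 2 := by
    have hsub : T.filter (fun p : ℕ × ℕ => ¬ Nat.gcd p.1 p.2 = 1) ⊆
        (Finset.Icc 2 N).biUnion (fun d => T.filter (fun p : ℕ × ℕ => d ∣ p.1 ∧ d ∣ p.2)) := by
      intro p hp
      simp only [Finset.mem_filter, hT, Finset.mem_product, Finset.mem_Icc] at hp
      obtain ⟨⟨⟨h1, h2⟩, h3, h4⟩, hg⟩ := hp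
      have hgd1 : Nat.gcd p.1 p.2 ∣ p.1 := Nat.gcd_dvd_left _ _
      have hgpos : 1 ≤ Nat.gcd p.1 p.2 := Nat.le_of_dvd h1 hgd1 |> fun _ =>
        Nat.succ_le_of_lt (Nat.pos_of_ne_zero (fun h0 => by
          simp [Nat.gcd_eq_zero_iff] at h0; omega))
      have hg2 : 2 ≤ Nat.gcd p.1 p.2 := by omega
      have hgN : Nat.gcd p.1 p.2 ≤ N := le_trans (Nat.le_of_dvd h1 hgd1) h2
      rw [Finset.mem_biUnion]
      refine ⟨Nat.gcd p.1 p.2, Finset.mem_Icc.mpr ⟨hg2, hgN⟩, ?_⟩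
      simp only [Finset.mem_filter, hT, Finset.mem_product, Finset.mem_Icc]
      exact ⟨⟨⟨h1, h2⟩, h3, h4⟩, Nat.gcd_dvd_left _ _, Nat.gcd_dvd_right _ _⟩
    calc _ ≤ _ := Finset.card_le_card hsub
      _ ≤ ∑ d ∈ Finset.Icc 2 N, (T.filter (fun p : ℕ × ℕ => d ∣ p.1 ∧ d ∣ p.2)).card :=
        Finset.card_biUnion_le
      _ ≤ ∑ d ∈ Finset.Icc 2 N, (N / d) ^ 2 := by
        apply Finset.sum_le_sum
        intro d hd
        exact div_pairs_card N d (by simp only [Finset.mem_Icc] at hd; omega)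
  -- now in ℝ
  have hncR : ((T.filter (fun p : ℕ × ℕ => ¬ Nat.gcd p.1 p.2 = 1)).card : ℝ) ≤
      3 / 4 * (N : ℝ) ^ 2 := by
    calc ((T.filter (fun p : ℕ × ℕ => ¬ Nat.gcd p.1 p.2 = 1)).card : ℝ)
        ≤ ∑ d ∈ Finset.Icc 2 N, ((N / d : ℕ) : ℝ) ^ 2 := by
          exact_mod_cast Nat.cast_le.mpr hnc |>.trans_eq (by push_cast; ring_nf)
      _ ≤ ∑ d ∈ Finset.Icc 2 N, (N : ℝ) ^ 2 * ((d : ℝ) ^ 2)⁻¹ := by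
          apply Finset.sum_le_sum
          intro d hd
          simp only [Finset.mem_Icc] at hd
          have hdpos : (0 : ℝ) < (d : ℝ) := by exact_mod_cast (by omega : 0 < d)
          have h1 : ((N / d : ℕ) : ℝ) ≤ (N : ℝ) / (d : ℝ) := by
            apply Nat.cast_div_le
          calc ((N / d : ℕ) : ℝ) ^ 2 ≤ ((N : ℝ) / (d : ℝ)) ^ 2 := by
                apply pow_le_pow_left₀ (by positivity) h1
            _ = (N : ℝ) ^ 2 * ((d : ℝ) ^ 2)⁻¹ := by
                field_simp
      _ = (N : ℝ) ^ 2 * ∑ d ∈ Finset.Icc 2 N, ((d : ℝ) ^ 2)⁻¹ := by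
          rw [Finset.mul_sum]
      _ ≤ (N : ℝ) ^ 2 * (3 / 4) := by
          apply mul_le_mul_of_nonneg_left (inv_sq_sum_le N) (by positivity)
      _ = 3 / 4 * (N : ℝ) ^ 2 := by ring
  have : ((T.filter (fun p : ℕ × ℕ => Nat.gcd p.1 p.2 = 1)).card : ℝ)
      = (N : ℝ) ^ 2 - ((T.filter (fun p : ℕ × ℕ => ¬ Nat.gcd p.1 p.2 = 1)).card : ℝ) := by
    have := hsplit
    rw [hcardT] at this
    have := congrArg (fun n : ℕ => (n : ℝ)) this
    push_cast at this
    linarith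
  rw [this]
  linarith

lemma shell_card (j : ℕ) (hj : 1 ≤ j) :
    (((Finset.Icc 1 (2 ^ j)) ×ˢ (Finset.Icc 1 (2 ^ j))).filter
      (fun p : ℕ × ℕ => 2 ^ (j - 1) < max p.1 p.2)).card = 3 * 4 ^ (j - 1) := by
  set T := (Finset.Icc 1 (2 ^ j)) ×ˢ (Finset.Icc 1 (2 ^ j)) with hT
  have hcardT : T.card = 4 ^ j := by
    simp only [hT, Finset.card_product, Nat.card_Icc]
    have : 2 ^ j + 1 - 1 = 2 ^ j := Nat.add_sub_cancel _ _
    rw [this, ← Nat.mul_pow]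
  have hsplit := Finset.card_filter_add_card_filter_not
    (s := T) (p := fun p : ℕ × ℕ => 2 ^ (j - 1) < max p.1 p.2)
  have hneg : T.filter (fun p : ℕ × ℕ => ¬ 2 ^ (j - 1) < max p.1 p.2)
      = (Finset.Icc 1 (2 ^ (j - 1))) ×ˢ (Finset.Icc 1 (2 ^ (j - 1))) := by
    ext p
    simp only [Finset.mem_filter, hT, Finset.mem_product, Finset.mem_Icc, not_lt,
      max_le_iff]
    have hle : 2 ^ (j - 1) ≤ 2 ^ j := Nat.pow_le_pow_right (by norm_num) (by omega)
    constructor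
    · rintro ⟨⟨⟨a1, a2⟩, b1, b2⟩, c1, c2⟩
      exact ⟨⟨a1, c1⟩, b1, c2⟩
    · rintro ⟨⟨a1, a2⟩, b1, b2⟩
      exact ⟨⟨⟨a1, a2.trans hle⟩, b1, b2.trans hle⟩, a2, b2⟩
  have hnegcard : (T.filter (fun p : ℕ × ℕ => ¬ 2 ^ (j - 1) < max p.1 p.2)).card
      = 4 ^ (j - 1) := by
    rw [hneg]
    simp only [Finset.card_product, Nat.card_Icc]
    have : 2 ^ (j - 1) + 1 - 1 = 2 ^ (j - 1) := Nat.add_sub_cancel _ _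
    rw [this, ← Nat.mul_pow]
  have h4 : (4 : ℕ) ^ j = 4 * 4 ^ (j - 1) := by
    conv_lhs => rw [show j = (j - 1) + 1 by omega]
    rw [pow_succ]
    ring
  omega

def Pset (N : ℕ) : Finset (ℕ × ℕ) :=
  ((Finset.Icc 1 N) ×ˢ (Finset.Icc 1 N)).filter (fun p : ℕ × ℕ => Nat.gcd p.1 p.2 = 1)

def Sset (j : ℕ) : Finset (ℕ × ℕ) :=
  ((Finset.Icc 1 (2 ^ j)) ×ˢ (Finset.Icc 1 (2 ^ j))).filter
    (fun p : ℕ × ℕ => 2 ^ (j - 1) < max p.1 p.2)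

def Lset (M j : ℕ) : Finset ((ℕ × ℕ) × (ℕ × ℕ)) := Pset (M / 2 ^ j) ×ˢ Sset j

lemma lset_mem {M j : ℕ} {x : (ℕ × ℕ) × (ℕ × ℕ)} (hx : x ∈ Lset M j) :
    Nat.gcd x.1.1 x.1.2 = 1 ∧ 1 ≤ x.1.1 ∧ 1 ≤ x.1.2 ∧ 1 ≤ x.2.1 ∧ 1 ≤ x.2.2 ∧
      x.1.1 * x.2.1 ≤ M ∧ x.1.2 * x.2.1 ≤ M ∧ x.1.1 * x.2.2 ≤ M ∧ x.1.2 * x.2.2 ≤ M ∧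
      x.2.1 ≤ 2 ^ j ∧ x.2.2 ≤ 2 ^ j ∧ 2 ^ (j - 1) < max x.2.1 x.2.2 := by
  simp only [Lset, Pset, Sset, Finset.mem_product, Finset.mem_filter, Finset.mem_Icc] at hx
  obtain ⟨⟨⟨⟨ha1, ha2⟩, hb1, hb2⟩, hg⟩, ⟨⟨hs1, hs2⟩, ht1, ht2⟩, hmax⟩ := hx
  have key : ∀ u v : ℕ, u ≤ M / 2 ^ j → v ≤ 2 ^ j → u * v ≤ M := by
    intro u v hu hv
    calc u * v ≤ (M / 2 ^ j) * 2 ^ j := Nat.mul_le_mul hu hv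
      _ ≤ M := Nat.div_mul_le_self _ _
  exact ⟨hg, ha1, hb1, hs1, ht1, key _ _ ha2 hs2, key _ _ hb2 hs2,
    key _ _ ha2 ht2, key _ _ hb2 ht2, hs2, ht2, hmax⟩

lemma lower_card (M : ℕ) :
    ∑ j ∈ Finset.Icc 1 (Nat.log 2 M), (Lset M j).card ≤ (quadSet M).card := by
  set B := (Finset.Icc 1 (Nat.log 2 M)).biUnion (fun j => Lset M j) with hB
  have hdisj : ∀ i ∈ Finset.Icc 1 (Nat.log 2 M), ∀ j ∈ Finset.Icc 1 (Nat.log 2 M),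
      i ≠ j → Disjoint (Lset M i) (Lset M j) := by
    intro i hi j hj hij
    rw [Finset.disjoint_left]
    intro x hxi hxj
    obtain ⟨-, -, -, -, -, -, -, -, -, hsi, hti, hmi⟩ := lset_mem hxi
    obtain ⟨-, -, -, -, -, -, -, -, -, hsj, htj, hmj⟩ := lset_mem hxj
    simp only [Finset.mem_Icc] at hi hj
    rcases Nat.lt_or_ge i j with h | h
    · have : max x.2.1 x.2.2 ≤ 2 ^ (j - 1) := by
        have : (2:ℕ) ^ i ≤ 2 ^ (j - 1) := Nat.pow_le_pow_right (by norm_num) (by omega)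
        exact le_trans (max_le hsi hti) this
      omega
    · have hji : j < i := by omega
      have : max x.2.1 x.2.2 ≤ 2 ^ (i - 1) := by
        have : (2:ℕ) ^ j ≤ 2 ^ (i - 1) := Nat.pow_le_pow_right (by norm_num) (by omega)
        exact le_trans (max_le hsj htj) this
      omega
  rw [← Finset.card_biUnion hdisj, ← hB]
  apply Finset.card_le_card_of_injOn
    (fun x : (ℕ × ℕ) × (ℕ × ℕ) => (x.1.1 * x.2.1, x.1.2 * x.2.1, x.1.1 * x.2.2, x.1.2 * x.2.2))
  · intro x hx
    rw [hB, Finset.mem_coe, Finset.mem_biUnion] at hx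
    obtain ⟨j, -, hxj⟩ := hx
    obtain ⟨hg, ha, hb, hs, ht, h1, h2, h3, h4, -, -, -⟩ := lset_mem hxj
    simp only [Finset.mem_coe, quadSet, Finset.mem_filter, Finset.mem_product, Finset.mem_Icc]
    refine ⟨⟨⟨Nat.one_le_iff_ne_zero.mpr (by positivity), h1⟩,
      ⟨Nat.one_le_iff_ne_zero.mpr (by positivity), h2⟩,
      ⟨Nat.one_le_iff_ne_zero.mpr (by positivity), h3⟩,
      ⟨Nat.one_le_iff_ne_zero.mpr (by positivity), h4⟩⟩, by ring⟩
  · intro x hx y hy hxy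
    simp only [Finset.mem_coe, hB, Finset.mem_biUnion] at hx hy
    obtain ⟨i, -, hxi⟩ := hx
    obtain ⟨j, -, hyj⟩ := hy
    obtain ⟨hg, ha, hb, hs, ht, -, -, -, -, -, -, -⟩ := lset_mem hxi
    obtain ⟨hg', ha', hb', hs', ht', -, -, -, -, -, -, -⟩ := lset_mem hyj
    obtain ⟨x1, x2⟩ := x
    obtain ⟨a, b⟩ := x1
    obtain ⟨s, t⟩ := x2
    obtain ⟨y1, y2⟩ := y
    obtain ⟨a', b'⟩ := y1
    obtain ⟨s', t'⟩ := y2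
    simp only [Prod.mk.injEq] at hxy ⊢
    obtain ⟨e1, e2, e3, e4⟩ := hxy
    simp only at hg ha hb hs ht hg' ha' hb' hs' ht'
    -- derive a * b' = a' * b
    have hab : a * b' = a' * b := by
      have h : (a * b') * (s * s') = (a' * b) * (s * s') := by
        calc (a * b') * (s * s') = (a * s) * (b' * s') := by ring
          _ = (a' * s') * (b * s) := by rw [e1, e2]
          _ = (a' * b) * (s * s') := by ring
      exact Nat.eq_of_mul_eq_mul_right (by positivity) h
    have haa' : a = a' := by
      have d1 : a ∣ a' := by
        have : a ∣ b * a' := ⟨b', by linarith [hab]⟩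
        exact (Nat.Coprime.dvd_of_dvd_mul_left hg this)
      have d2 : a' ∣ a := by
        have : a' ∣ b' * a := ⟨b, by linarith [hab]⟩
        exact (Nat.Coprime.dvd_of_dvd_mul_left hg' this)
      exact Nat.dvd_antisymm d1 d2
    have hss' : s = s' := by
      subst haa'
      exact Nat.eq_of_mul_eq_mul_left (by omega) e1
    have hbb' : b = b' := by
      subst hss'
      exact Nat.eq_of_mul_eq_mul_right (by omega) e2
    have htt' : t = t' := by
      subst haa'
      exact Nat.eq_of_mul_eq_mul_left (by omega) e3
    exact ⟨⟨haa', hbb'⟩, hss', htt'⟩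

lemma nat_div_double {M D : ℕ} (hD : 0 < D) (h : D ≤ M) : M ≤ 2 * (D * (M / D)) := by
  have hdm := Nat.div_add_mod M D
  have hmod : M % D < D := Nat.mod_lt _ hD
  have h1 : 1 ≤ M / D := (Nat.one_le_div_iff hD).mpr h
  have h2 : D ≤ D * (M / D) := Nat.le_mul_of_pos_right _ h1
  omega

lemma lset_card_lower (M j : ℕ) (hj : 1 ≤ j) (hjM : 2 ^ j ≤ M) :
    3 / 64 * (M : ℝ) ^ 2 ≤ ((Lset M j).card : ℝ) := by
  obtain ⟨k, rfl⟩ : ∃ k, j = k + 1 := ⟨j - 1, by omega⟩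
  have hcard : (Lset M (k + 1)).card = (Pset (M / 2 ^ (k + 1))).card * (3 * 4 ^ k) := by
    rw [Lset, Finset.card_product]
    congr 1
    have h := shell_card (k + 1) (by omega)
    simp only [Nat.add_sub_cancel] at h
    rw [Sset]
    simpa only [Nat.add_sub_cancel] using h
  set N := M / 2 ^ (k + 1) with hN
  have hN1 : 1 ≤ N := (Nat.one_le_div_iff (by positivity)).mpr hjM
  have hNnat : M ≤ 2 * (2 ^ (k + 1) * N) := nat_div_double (by positivity) hjM
  have hNreal : (M : ℝ) ≤ 2 ^ (k + 2) * (N : ℝ) := by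
    have : ((M : ℕ) : ℝ) ≤ ((2 * (2 ^ (k + 1) * N) : ℕ) : ℝ) := Nat.cast_le.mpr hNnat
    push_cast at this
    calc (M : ℝ) ≤ 2 * (2 ^ (k + 1) * (N : ℝ)) := this
      _ = 2 ^ (k + 2) * (N : ℝ) := by ring
  have hPN : (N : ℝ) ^ 2 / 4 ≤ ((Pset N).card : ℝ) := coprime_pairs_card N
  have hNlow : (M : ℝ) / 2 ^ (k + 2) ≤ (N : ℝ) := by
    rw [div_le_iff₀ (by positivity)]
    linarith [hNreal]
  have hsq : ((M : ℝ) / 2 ^ (k + 2)) ^ 2 ≤ (N : ℝ) ^ 2 :=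
    pow_le_pow_left₀ (by positivity) hNlow 2
  rw [hcard]
  push_cast
  have hpow : ((2:ℝ) ^ (k + 2)) ^ 2 = 16 * 4 ^ k := by
    rw [← pow_mul, show (k + 2) * 2 = 2 * k + 4 from by ring, pow_add, pow_mul]
    norm_num [mul_comm]
  have step : (M : ℝ) ^ 2 / (16 * 4 ^ k) / 4 ≤ ((Pset N).card : ℝ) := by
    refine le_trans ?_ hPN
    gcongr
    calc (M : ℝ) ^ 2 / (16 * 4 ^ k) = ((M : ℝ) / 2 ^ (k + 2)) ^ 2 := by
          rw [div_pow, hpow]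
      _ ≤ (N : ℝ) ^ 2 := hsq
  have h4k : (0:ℝ) < 4 ^ k := by positivity
  calc 3 / 64 * (M : ℝ) ^ 2 = ((M : ℝ) ^ 2 / (16 * 4 ^ k) / 4) * (3 * 4 ^ k) := by
        field_simp
        ring
    _ ≤ ((Pset N).card : ℝ) * (3 * 4 ^ k) :=
        mul_le_mul_of_nonneg_right step (by positivity)

lemma lower_real (M : ℕ) (hM : 2 ≤ M) :
    3 / (128 * Real.log 2) * (M : ℝ) ^ 2 * Real.log M ≤ ((quadSet M).card : ℝ) := by
  set J := Nat.log 2 M with hJ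
  have hJ1 : 1 ≤ J := Nat.log_pos (by norm_num) hM
  have hlog2pos : (0:ℝ) < Real.log 2 := Real.log_pos (by norm_num)
  have hMpos : (0:ℝ) < (M:ℝ) := by exact_mod_cast (by omega : 0 < M)
  -- log M ≤ J * (2 log 2)
  have hM4 : (M : ℝ) ≤ 4 ^ J := by
    have h1 : M < 2 ^ (J + 1) := Nat.lt_pow_succ_log_self (by norm_num) M
    have h2 : (2:ℕ) ^ (J + 1) ≤ 4 ^ J := by
      calc (2:ℕ) ^ (J + 1) ≤ 2 ^ (2 * J) := Nat.pow_le_pow_right (by norm_num) (by omega)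
        _ = 4 ^ J := by rw [pow_mul]; norm_num
    exact_mod_cast (by omega : M ≤ 4 ^ J)
  have hlogM : Real.log M ≤ J * (2 * Real.log 2) := by
    calc Real.log M ≤ Real.log (4 ^ J) := Real.log_le_log (by positivity) hM4
      _ = J * Real.log 4 := by rw [Real.log_pow]
      _ = J * (2 * Real.log 2) := by
          congr 1
          rw [show (4:ℝ) = 2 ^ 2 by norm_num, Real.log_pow]
          push_cast; ring
  -- sum bound
  have hsum : (J : ℝ) * (3 / 64 * (M : ℝ) ^ 2) ≤
      ∑ j ∈ Finset.Icc 1 J, ((Lset M j).card : ℝ) := by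
    have : ∀ j ∈ Finset.Icc 1 J, 3 / 64 * (M : ℝ) ^ 2 ≤ ((Lset M j).card : ℝ) := by
      intro j hj
      simp only [Finset.mem_Icc] at hj
      apply lset_card_lower M j hj.1
      calc (2:ℕ) ^ j ≤ 2 ^ J := Nat.pow_le_pow_right (by norm_num) hj.2
        _ ≤ M := Nat.pow_log_le_self 2 (by omega)
    calc (J : ℝ) * (3 / 64 * (M : ℝ) ^ 2)
        = ∑ _j ∈ Finset.Icc 1 J, (3 / 64 * (M : ℝ) ^ 2) := by
          rw [Finset.sum_const, Nat.card_Icc]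
          simp [nsmul_eq_mul]
      _ ≤ _ := Finset.sum_le_sum this
  have hcast : (∑ j ∈ Finset.Icc 1 J, ((Lset M j).card : ℝ)) ≤ ((quadSet M).card : ℝ) := by
    have := lower_card M
    rw [hJ]
    push_cast
    exact_mod_cast Nat.cast_le.mpr this |>.trans_eq rfl
  calc 3 / (128 * Real.log 2) * (M : ℝ) ^ 2 * Real.log M
      = (Real.log M / (2 * Real.log 2)) * (3 / 64 * (M : ℝ) ^ 2) := by
        field_simp
        ring
    _ ≤ (J : ℝ) * (3 / 64 * (M : ℝ) ^ 2) := by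
        apply mul_le_mul_of_nonneg_right _ (by positivity)
        rw [div_le_iff₀ (by positivity)]
        linarith [hlogM]
    _ ≤ ∑ j ∈ Finset.Icc 1 J, ((Lset M j).card : ℝ) := hsum
    _ ≤ ((quadSet M).card : ℝ) := hcast

def upSet (M : ℕ) : Finset ((_p : ℕ × ℕ) × (ℕ × ℕ)) :=
  ((Finset.Icc 1 M) ×ˢ (Finset.Icc 1 M)).sigma
    (fun p => (Finset.Icc 1 (M / max p.1 p.2)) ×ˢ (Finset.Icc 1 (M / max p.1 p.2)))

lemma quad_decomp {n1 n2 n3 n4 : ℕ} (h1 : 1 ≤ n1) (h2 : 1 ≤ n2) (h4 : 1 ≤ n4)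
    (he : n1 * n4 = n2 * n3) :
    (n1 / Nat.gcd n1 n2) * Nat.gcd n1 n2 = n1 ∧
    (n2 / Nat.gcd n1 n2) * Nat.gcd n1 n2 = n2 ∧
    (n1 / Nat.gcd n1 n2) * (n4 / (n2 / Nat.gcd n1 n2)) = n3 ∧
    (n2 / Nat.gcd n1 n2) * (n4 / (n2 / Nat.gcd n1 n2)) = n4 ∧
    Nat.Coprime (n1 / Nat.gcd n1 n2) (n2 / Nat.gcd n1 n2) := by
  set g := Nat.gcd n1 n2 with hg
  have hgpos : 0 < g := Nat.gcd_pos_of_pos_left _ (by omega)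
  set a := n1 / g with ha
  set b := n2 / g with hb
  have hag : a * g = n1 := Nat.div_mul_cancel (Nat.gcd_dvd_left _ _)
  have hbg : b * g = n2 := Nat.div_mul_cancel (Nat.gcd_dvd_right _ _)
  have hcop : Nat.Coprime a b := Nat.coprime_div_gcd_div_gcd hgpos
  have hbpos : 0 < b := by
    rcases Nat.eq_zero_or_pos b with h | h
    · rw [h] at hbg; omega
    · exact h
  have hkey : a * n4 = b * n3 := by
    have : (a * n4) * g = (b * n3) * g := by
      calc (a * n4) * g = (a * g) * n4 := by ring
        _ = n1 * n4 := by rw [hag]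
        _ = n2 * n3 := he
        _ = (b * g) * n3 := by rw [hbg]
        _ = (b * n3) * g := by ring
    exact Nat.eq_of_mul_eq_mul_right hgpos this
  have hbdvd : b ∣ n4 := by
    have hd : b ∣ a * n4 := ⟨n3, hkey⟩
    exact (Nat.Coprime.dvd_of_dvd_mul_left (Nat.Coprime.symm hcop) hd)
  set t := n4 / b with ht
  have hbt : b * t = n4 := Nat.mul_div_cancel' hbdvd
  have hat : a * t = n3 := by
    have : b * (a * t) = b * n3 := by
      calc b * (a * t) = a * (b * t) := by ring
        _ = a * n4 := by rw [hbt]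
        _ = b * n3 := hkey
    exact Nat.eq_of_mul_eq_mul_left hbpos this
  exact ⟨hag, hbg, hat, hbt, hcop⟩

lemma upper_card (M : ℕ) : (quadSet M).card ≤ (upSet M).card := by
  classical
  apply Finset.card_le_card_of_injOn
    (fun x : ℕ × ℕ × ℕ × ℕ =>
      ⟨(x.1 / Nat.gcd x.1 x.2.1, x.2.1 / Nat.gcd x.1 x.2.1),
        (Nat.gcd x.1 x.2.1, x.2.2.2 / (x.2.1 / Nat.gcd x.1 x.2.1))⟩)
  · intro x hx
    simp only [Finset.mem_coe, quadSet, Finset.mem_filter, Finset.mem_product, Finset.mem_Icc] at hx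
    obtain ⟨⟨⟨h11, h12⟩, ⟨h21, h22⟩, ⟨h31, h32⟩, h41, h42⟩, he⟩ := hx
    obtain ⟨hag, hbg, hat, hbt, hcop⟩ := quad_decomp h11 h21 h41 he
    set g := Nat.gcd x.1 x.2.1
    set a := x.1 / g
    set b := x.2.1 / g
    set t := x.2.2.2 / b
    have hapos : 0 < a := by rcases Nat.eq_zero_or_pos a with h | h; · rw [h] at hag; omega
                             · exact h
    have hbpos : 0 < b := by rcases Nat.eq_zero_or_pos b with h | h; · rw [h] at hbg; omega
                             · exact h
    have hgpos : 0 < g := Nat.gcd_pos_of_pos_left _ (by omega)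
    have htpos : 0 < t := by rcases Nat.eq_zero_or_pos t with h | h
                             · rw [h, mul_zero] at hbt; omega
                             · exact h
    have hmaxpos : 0 < max a b := by omega
    simp only [Finset.mem_coe, upSet, Finset.mem_sigma, Finset.mem_product, Finset.mem_Icc]
    have hsle : g ≤ M / max a b := by
      rw [Nat.le_div_iff_mul_le hmaxpos]
      rcases max_cases a b with ⟨hm, -⟩ | ⟨hm, -⟩ <;> rw [hm]
      · calc g * a = a * g := by ring
          _ ≤ M := by rw [hag]; exact h12
      · calc g * b = b * g := by ring
          _ ≤ M := by rw [hbg]; exact h22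
    have htle : t ≤ M / max a b := by
      rw [Nat.le_div_iff_mul_le hmaxpos]
      rcases max_cases a b with ⟨hm, -⟩ | ⟨hm, -⟩ <;> rw [hm]
      · calc t * a = a * t := by ring
          _ ≤ M := by rw [hat]; exact h32
      · calc t * b = b * t := by ring
          _ ≤ M := by rw [hbt]; exact h42
    refine ⟨⟨⟨hapos, ?_⟩, hbpos, ?_⟩, ⟨hgpos, hsle⟩, htpos, htle⟩
    · calc a ≤ a * g := Nat.le_mul_of_pos_right _ hgpos
        _ ≤ M := by rw [hag]; exact h12
    · calc b ≤ b * g := Nat.le_mul_of_pos_right _ hgpos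
        _ ≤ M := by rw [hbg]; exact h22
  · intro x hx y hy hxy
    simp only [Finset.mem_coe, quadSet, Finset.mem_filter, Finset.mem_product,
      Finset.mem_Icc] at hx hy
    obtain ⟨⟨⟨hx11, -⟩, ⟨hx21, -⟩, -, hx41, -⟩, hxe⟩ := hx
    obtain ⟨⟨⟨hy11, -⟩, ⟨hy21, -⟩, -, hy41, -⟩, hye⟩ := hy
    obtain ⟨hagx, hbgx, hatx, hbtx, -⟩ := quad_decomp hx11 hx21 hx41 hxe
    obtain ⟨hagy, hbgy, haty, hbty, -⟩ := quad_decomp hy11 hy21 hy41 hye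
    rw [Sigma.mk.inj_iff] at hxy
    obtain ⟨eab, hheq⟩ := hxy
    have ea := congrArg Prod.fst eab
    have eb := congrArg Prod.snd eab
    simp only at ea eb
    have hst : (Nat.gcd x.1 x.2.1, x.2.2.2 / (x.2.1 / Nat.gcd x.1 x.2.1)) =
        (Nat.gcd y.1 y.2.1, y.2.2.2 / (y.2.1 / Nat.gcd y.1 y.2.1)) := eq_of_heq hheq
    have es := congrArg Prod.fst hst
    have et := congrArg Prod.snd hst
    simp only at es et
    obtain ⟨x1, x2, x3, x4⟩ := x
    obtain ⟨y1, y2, y3, y4⟩ := y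
    simp only at ea eb es et hagx hbgx hatx hbtx hagy hbgy haty hbty
    have e1 : x1 = y1 := by rw [← hagx, ← hagy, ea, es]
    have e2 : x2 = y2 := by rw [← hbgx, ← hbgy, eb, es]
    subst e1
    subst e2
    have e4 : x4 = y4 := by rw [← hbtx, ← hbty, et]
    subst e4
    have e3 : x3 = y3 := by rw [← hatx, ← haty]
    simp [e3]

lemma triSum (M a c : ℕ) (ha : a ≤ M) :
    ∑ b ∈ Finset.Icc 1 M, (if b ≤ a then c else 0) = a * c := by
  rw [← Finset.sum_filter]
  have : (Finset.Icc 1 M).filter (fun b => b ≤ a) = Finset.Icc 1 a := by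
    ext b
    simp only [Finset.mem_filter, Finset.mem_Icc]
    omega
  rw [this, Finset.sum_const, Nat.card_Icc, smul_eq_mul, Nat.add_sub_cancel]

lemma upSet_card_le (M : ℕ) :
    (upSet M).card ≤ 2 * ∑ a ∈ Finset.Icc 1 M, a * (M / a) ^ 2 := by
  have h1 : (upSet M).card =
      ∑ p ∈ (Finset.Icc 1 M) ×ˢ (Finset.Icc 1 M), (M / max p.1 p.2) ^ 2 := by
    rw [upSet, Finset.card_sigma]
    apply Finset.sum_congr rfl
    intro p _
    simp [Nat.card_Icc, sq]
  rw [h1, Finset.sum_product]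
  calc ∑ a ∈ Finset.Icc 1 M, ∑ b ∈ Finset.Icc 1 M, (M / max a b) ^ 2
      ≤ ∑ a ∈ Finset.Icc 1 M, ∑ b ∈ Finset.Icc 1 M,
          ((if b ≤ a then (M / a) ^ 2 else 0) + (if a ≤ b then (M / b) ^ 2 else 0)) := by
        apply Finset.sum_le_sum
        intro a _
        apply Finset.sum_le_sum
        intro b _
        rcases le_total b a with h | h
        · rw [max_eq_left h, if_pos h]
          exact Nat.le_add_right _ _
        · rw [max_eq_right h, if_pos h]
          exact Nat.le_add_left _ _
    _ = (∑ a ∈ Finset.Icc 1 M, ∑ b ∈ Finset.Icc 1 M, (if b ≤ a then (M / a) ^ 2 else 0))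
        + ∑ a ∈ Finset.Icc 1 M, ∑ b ∈ Finset.Icc 1 M, (if a ≤ b then (M / b) ^ 2 else 0) := by
        rw [← Finset.sum_add_distrib]
        apply Finset.sum_congr rfl
        intro a _
        rw [← Finset.sum_add_distrib]
    _ = (∑ a ∈ Finset.Icc 1 M, a * (M / a) ^ 2)
        + ∑ a ∈ Finset.Icc 1 M, a * (M / a) ^ 2 := by
        congr 1
        · apply Finset.sum_congr rfl
          intro a ha
          simp only [Finset.mem_Icc] at ha
          exact triSum M a _ ha.2
        · rw [Finset.sum_comm]
          apply Finset.sum_congr rfl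
          intro b hb
          simp only [Finset.mem_Icc] at hb
          exact triSum M b _ hb.2
    _ = 2 * ∑ a ∈ Finset.Icc 1 M, a * (M / a) ^ 2 := by ring

lemma upper_real (M : ℕ) (hM : 2 ≤ M) :
    ((quadSet M).card : ℝ) ≤ (2 * (1 + 1 / Real.log 2)) * (M : ℝ) ^ 2 * Real.log M := by
  have hMpos : (0:ℝ) < (M:ℝ) := by exact_mod_cast (by omega : 0 < M)
  have hlog2 : (0:ℝ) < Real.log 2 := Real.log_pos (by norm_num)
  have hlogM : Real.log 2 ≤ Real.log M := Real.log_le_log (by norm_num) (by exact_mod_cast hM)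
  have hlogMpos : (0:ℝ) < Real.log M := lt_of_lt_of_le hlog2 hlogM
  have step1 : ((quadSet M).card : ℝ) ≤ 2 * ∑ a ∈ Finset.Icc 1 M, (a : ℝ) * ((M / a : ℕ) : ℝ) ^ 2 := by
    have := (upper_card M).trans (upSet_card_le M)
    calc ((quadSet M).card : ℝ) ≤ ((2 * ∑ a ∈ Finset.Icc 1 M, a * (M / a) ^ 2 : ℕ) : ℝ) := by
          exact_mod_cast this
      _ = 2 * ∑ a ∈ Finset.Icc 1 M, (a : ℝ) * ((M / a : ℕ) : ℝ) ^ 2 := by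
          push_cast
          ring
  have step2 : ∑ a ∈ Finset.Icc 1 M, (a : ℝ) * ((M / a : ℕ) : ℝ) ^ 2 ≤
      (M : ℝ) ^ 2 * ∑ a ∈ Finset.Icc 1 M, (a : ℝ)⁻¹ := by
    rw [Finset.mul_sum]
    apply Finset.sum_le_sum
    intro a ha
    simp only [Finset.mem_Icc] at ha
    have hapos : (0:ℝ) < (a:ℝ) := by exact_mod_cast (by omega : 0 < a)
    have hcast : ((M / a : ℕ) : ℝ) ≤ (M : ℝ) / (a : ℝ) := Nat.cast_div_le
    calc (a : ℝ) * ((M / a : ℕ) : ℝ) ^ 2 ≤ (a : ℝ) * ((M : ℝ) / (a : ℝ)) ^ 2 := by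
          apply mul_le_mul_of_nonneg_left _ (le_of_lt hapos)
          exact pow_le_pow_left₀ (by positivity) hcast 2
      _ = (M : ℝ) ^ 2 * (a : ℝ)⁻¹ := by
          field_simp
  have step3 : ∑ a ∈ Finset.Icc 1 M, (a : ℝ)⁻¹ ≤ 1 + Real.log M := by
    have heq : ∑ a ∈ Finset.Icc 1 M, (a : ℝ)⁻¹ = ((harmonic M : ℚ) : ℝ) := by
      rw [harmonic_eq_sum_Icc]
      push_cast
      rfl
    rw [heq]
    exact harmonic_le_one_add_log M
  have step4 : 1 + Real.log M ≤ (1 + 1 / Real.log 2) * Real.log M := by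
    have h1 : (1:ℝ) ≤ Real.log M / Real.log 2 := by
      rw [le_div_iff₀ hlog2]
      linarith
    calc 1 + Real.log M ≤ Real.log M / Real.log 2 + Real.log M := by linarith
      _ = (1 + 1 / Real.log 2) * Real.log M := by ring
  calc ((quadSet M).card : ℝ)
      ≤ 2 * ∑ a ∈ Finset.Icc 1 M, (a : ℝ) * ((M / a : ℕ) : ℝ) ^ 2 := step1
    _ ≤ 2 * ((M : ℝ) ^ 2 * ∑ a ∈ Finset.Icc 1 M, (a : ℝ)⁻¹) := by linarith [step2]
    _ ≤ 2 * ((M : ℝ) ^ 2 * (1 + Real.log M)) := by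
        have := mul_le_mul_of_nonneg_left step3 (by positivity : (0:ℝ) ≤ (M:ℝ)^2)
        linarith
    _ ≤ 2 * ((M : ℝ) ^ 2 * ((1 + 1 / Real.log 2) * Real.log M)) := by
        have := mul_le_mul_of_nonneg_left step4 (by positivity : (0:ℝ) ≤ (M:ℝ)^2)
        linarith
    _ = (2 * (1 + 1 / Real.log 2)) * (M : ℝ) ^ 2 * Real.log M := by ring

/-- **Multiplicative energy of `{1, …, M}`.** There are absolute constants `c, C > 0`
such that for every integer `M ≥ 2` the number of quadruples `(n₁,n₂,n₃,n₄)` of integers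
in `{1, …, M}` with `n₁·n₄ = n₂·n₃` lies between `c·M²·log M` and `C·M²·log M`. -/
theorem multiplicative_energy_of_interval :
    ∃ c C : ℝ, 0 < c ∧ 0 < C ∧ ∀ M : ℕ, 2 ≤ M →
      c * (M : ℝ) ^ 2 * Real.log M ≤
        ((((Finset.Icc 1 M) ×ˢ (Finset.Icc 1 M) ×ˢ (Finset.Icc 1 M) ×ˢ
            (Finset.Icc 1 M)).filter
            (fun x : ℕ × ℕ × ℕ × ℕ => x.1 * x.2.2.2 = x.2.1 * x.2.2.1)).card : ℝ) ∧
      ((((Finset.Icc 1 M) ×ˢ (Finset.Icc 1 M) ×ˢ (Finset.Icc 1 M) ×ˢ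
          (Finset.Icc 1 M)).filter
          (fun x : ℕ × ℕ × ℕ × ℕ => x.1 * x.2.2.2 = x.2.1 * x.2.2.1)).card : ℝ) ≤
        C * (M : ℝ) ^ 2 * Real.log M := by
  have hlog2 : (0:ℝ) < Real.log 2 := Real.log_pos (by norm_num)
  refine ⟨3 / (128 * Real.log 2), 2 * (1 + 1 / Real.log 2), by positivity, by positivity, ?_⟩
  intro M hM
  exact ⟨lower_real M hM, upper_real M hM⟩
end

section
/- There is an absolute constant C such that for every finite nonempty set L of lines in ℝ³ there exists a nonzero real polynomial f in three variables of total degree at most C·√|L| such that every line of L is contained in the zero set of f. -/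
open MvPolynomial

/-- A line in `ℝ³`: a one-dimensional affine subspace, as a set of points. -/
def IsLine (l : Set (Fin 3 → ℝ)) : Prop :=
  ∃ p v : Fin 3 → ℝ, v ≠ 0 ∧ l = {x | ∃ t : ℝ, x = p + t • v}

private lemma natDegree_mvaeval_le (f : MvPolynomial (Fin 3) ℝ) (φ : Fin 3 → Polynomial ℝ)
    (h : ∀ i, (φ i).natDegree ≤ 1) :
    (MvPolynomial.aeval φ f).natDegree ≤ f.totalDegree := by
  conv_lhs => rw [f.as_sum]
  rw [map_sum]
  apply Polynomial.natDegree_sum_le_of_forall_le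
  intro w hw
  rw [MvPolynomial.aeval_monomial]
  refine Polynomial.natDegree_mul_le.trans ?_
  have h1 : (algebraMap ℝ (Polynomial ℝ) (MvPolynomial.coeff w f)).natDegree = 0 :=
    Polynomial.natDegree_C _
  rw [h1, zero_add]
  refine le_trans ?_ (MvPolynomial.le_totalDegree hw)
  rw [Finsupp.prod, Finsupp.sum]
  refine (Polynomial.natDegree_prod_le _ _).trans ?_
  refine Finset.sum_le_sum fun i _ => ?_
  calc (φ i ^ w i).natDegree ≤ w i * (φ i).natDegree := Polynomial.natDegree_pow_le
    _ ≤ w i * 1 := Nat.mul_le_mul_left _ (h i)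
    _ = w i := Nat.mul_one _

/-- **Polynomial interpolation for lines.** There is an absolute constant `C` such that
every finite nonempty set `L` of lines in `ℝ³` is contained in the zero set of some
nonzero polynomial in three variables of total degree at most `C·√|L|`. -/
theorem lines_contained_in_low_degree_surface :
    ∃ C : ℝ, 0 < C ∧
      ∀ L : Finset (Set (Fin 3 → ℝ)), L.Nonempty → (∀ l ∈ L, IsLine l) →
        ∃ f : MvPolynomial (Fin 3) ℝ, f ≠ 0 ∧
          (f.totalDegree : ℝ) ≤ C * Real.sqrt (L.card : ℝ) ∧
          ∀ l ∈ L, ∀ x ∈ l, MvPolynomial.eval x f = 0 := by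
  classical
  refine ⟨6, by norm_num, ?_⟩
  intro L hLne hlines
  set n : ℕ := L.card with hn
  have hn1 : 1 ≤ n := hLne.card_pos
  set k : ℕ := ⌊Real.sqrt (3 * n)⌋₊ with hk
  set m : ℕ := k + 1 with hmdef
  set d : ℕ := 3 * k with hddef
  -- sqrt facts
  have h3n0 : (0:ℝ) ≤ 3 * n := by positivity
  have hklt : Real.sqrt (3 * n) < m := by
    rw [hmdef, hk]
    exact_mod_cast Nat.lt_floor_add_one (Real.sqrt (3 * n))
  have hm2 : 3 * n < m ^ 2 := by
    have h1 : (3 * n : ℝ) < (m : ℝ) ^ 2 := by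
      have := Real.sq_sqrt h3n0
      nlinarith [Real.sqrt_nonneg (3 * (n:ℝ))]
    exact_mod_cast h1
  -- line data
  choose p v hv hrep using hlines
  -- index types
  let ι := Fin m × Fin m × Fin m
  let κ := {l // l ∈ L} × Fin (d + 1)
  -- monomial family
  let e : ι → (Fin 3 →₀ ℕ) := fun a =>
    Finsupp.single 0 (a.1 : ℕ) + Finsupp.single 1 (a.2.1 : ℕ) + Finsupp.single 2 (a.2.2 : ℕ)
  have he_apply : ∀ a : ι, (e a) 0 = (a.1 : ℕ) ∧ (e a) 1 = (a.2.1 : ℕ) ∧ (e a) 2 = (a.2.2 : ℕ) := by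
    intro a
    refine ⟨?_, ?_, ?_⟩ <;> simp [e, Finsupp.single_apply]
  have he : Function.Injective e := by
    intro a b hab
    obtain ⟨ha0, ha1, ha2⟩ := he_apply a
    obtain ⟨hb0, hb1, hb2⟩ := he_apply b
    have h0 : (a.1 : ℕ) = b.1 := by rw [← ha0, ← hb0, hab]
    have h1 : (a.2.1 : ℕ) = b.2.1 := by rw [← ha1, ← hb1, hab]
    have h2 : (a.2.2 : ℕ) = b.2.2 := by rw [← ha2, ← hb2, hab]
    exact Prod.ext (Fin.val_injective h0) (Prod.ext (Fin.val_injective h1) (Fin.val_injective h2))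
  let mono : ι → MvPolynomial (Fin 3) ℝ := fun a => monomial (e a) (1 : ℝ)
  have li : LinearIndependent ℝ mono := by
    have h2 := (MvPolynomial.basisMonomials (Fin 3) ℝ).linearIndependent.comp e he
    have : (⇑(MvPolynomial.basisMonomials (Fin 3) ℝ)) ∘ e = mono := by
      funext a
      simp [MvPolynomial.coe_basisMonomials, mono]
    rwa [this] at h2
  have hesum : ∀ a : ι, ((e a).sum fun _ => id) = (a.1 : ℕ) + a.2.1 + a.2.2 := by
    intro a
    simp [e, Finsupp.sum_add_index, Finsupp.sum_single_index]
  -- linear maps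
  let F : (ι → ℝ) →ₗ[ℝ] MvPolynomial (Fin 3) ℝ := Fintype.linearCombination ℝ mono
  let pt : κ → (Fin 3 → ℝ) := fun q => p q.1.1 q.1.2 + ((q.2 : ℕ) : ℝ) • v q.1.1 q.1.2
  let T : (ι → ℝ) →ₗ[ℝ] (κ → ℝ) :=
    LinearMap.pi fun q => (MvPolynomial.aeval (pt q)).toLinearMap ∘ₗ F
  -- dimension count
  have hcard : Fintype.card κ < Fintype.card ι := by
    have hκ : Fintype.card κ = n * (d + 1) := by
      simp [κ, Fintype.card_coe, hn]
    have hι : Fintype.card ι = m * (m * m) := by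
      simp [ι]
    rw [hκ, hι, hmdef, hddef]
    have hm2' : 3 * n < (k + 1) ^ 2 := hm2
    nlinarith [hm2', hn1, Nat.mul_lt_mul_of_pos_right hm2' (Nat.succ_pos k)]
  have hninj : ¬ Function.Injective T := by
    intro hinj
    have hle := LinearMap.finrank_le_finrank_of_injective hinj
    rw [Module.finrank_pi ℝ, Module.finrank_pi ℝ] at hle
    omega
  have hker : ∃ c : ι → ℝ, c ≠ 0 ∧ T c = 0 := by
    have : LinearMap.ker T ≠ ⊥ := fun h => hninj (LinearMap.ker_eq_bot.mp h)
    obtain ⟨c, hc, hc0⟩ := Submodule.ne_bot_iff _ |>.mp this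
    exact ⟨c, hc0, hc⟩
  obtain ⟨c, hc0, hTc⟩ := hker
  refine ⟨F c, ?_, ?_, ?_⟩
  · -- nonzero
    intro hzero
    apply hc0
    funext i
    refine Fintype.linearIndependent_iff.mp li c ?_ i
    rw [← Fintype.linearCombination_apply (R := ℝ) (v := mono)]
    exact hzero
  · -- degree bound
    have hdeg : (F c).totalDegree ≤ d := by
      rw [Fintype.linearCombination_apply (R := ℝ) (v := mono)]
      refine MvPolynomial.totalDegree_finsetSum_le fun a _ => ?_
      refine (MvPolynomial.totalDegree_smul_le (R := ℝ) _ _).trans ?_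
      refine (MvPolynomial.totalDegree_monomial_le _ _).trans ?_
      rw [hesum a]
      have h1 := a.1.isLt
      have h2 := a.2.1.isLt
      have h3 := a.2.2.isLt
      omega
    have hdr : ((F c).totalDegree : ℝ) ≤ (d : ℝ) := by exact_mod_cast hdeg
    refine hdr.trans ?_
    have hkle : (k : ℝ) ≤ Real.sqrt (3 * n) := Nat.floor_le (Real.sqrt_nonneg _)
    have hsqrt3 : Real.sqrt (3 * n) ≤ 2 * Real.sqrt n := by
      rw [show (3 * n : ℝ) = 3 * (n : ℝ) by norm_num, Real.sqrt_mul (by norm_num)]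
      have h3 : Real.sqrt 3 ≤ 2 := by
        nlinarith [Real.sq_sqrt (show (0:ℝ) ≤ 3 by norm_num), Real.sqrt_nonneg 3]
      nlinarith [Real.sqrt_nonneg (n : ℝ)]
    calc (d : ℝ) = 3 * k := by rw [hddef]; push_cast; ring
      _ ≤ 3 * (2 * Real.sqrt n) := by nlinarith [hkle.trans hsqrt3]
      _ = 6 * Real.sqrt n := by ring
  · -- vanishing
    intro l hl x hx
    obtain ⟨t, hxt⟩ := by rw [hrep l hl] at hx; exact hx
    set P : Fin 3 → ℝ := p l hl with hP
    set V : Fin 3 → ℝ := v l hl with hV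
    let G : Polynomial ℝ :=
      MvPolynomial.aeval (fun i => Polynomial.C (P i) + Polynomial.C (V i) * Polynomial.X) (F c)
    have hGeval : ∀ s : ℝ, Polynomial.eval s G = MvPolynomial.eval (P + s • V) (F c) := by
      intro s
      have h1 : Polynomial.eval s G = Polynomial.aeval s G := by
        rw [← Polynomial.coe_aeval_eq_eval]
      have h2 : (Polynomial.aeval s).comp
          (MvPolynomial.aeval (R := ℝ)
            (fun i => Polynomial.C (P i) + Polynomial.C (V i) * Polynomial.X))
          = MvPolynomial.aeval (fun i => P i + s * V i) := by
        rw [MvPolynomial.comp_aeval]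
        congr 1
        funext i
        simp only [map_add, map_mul, Polynomial.aeval_C, Polynomial.aeval_X,
          Algebra.algebraMap_self, RingHom.id_apply]
        ring
      have h3 : Polynomial.aeval s G = MvPolynomial.aeval (fun i => P i + s * V i) (F c) := by
        show (Polynomial.aeval s) (MvPolynomial.aeval _ (F c)) = _
        rw [← AlgHom.comp_apply, h2]
      have h4 : MvPolynomial.aeval (fun i => P i + s * V i) (F c)
          = MvPolynomial.eval (fun i => P i + s * V i) (F c) := by
        rw [← MvPolynomial.coe_aeval_eq_eval]; rfl
      have h5 : (fun i => P i + s * V i) = P + s • V := by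
        funext i; simp [Pi.add_apply, Pi.smul_apply, smul_eq_mul]
      rw [h1, h3, h4, h5]
    have hroots : ∀ j : ℕ, j < d + 1 → Polynomial.eval ((j : ℝ)) G = 0 := by
      intro j hj
      have := congrFun hTc ⟨⟨l, hl⟩, ⟨j, hj⟩⟩
      simp only [T, LinearMap.pi_apply, LinearMap.comp_apply, AlgHom.toLinearMap_apply,
        Pi.zero_apply] at this
      have haev : MvPolynomial.aeval (pt (⟨⟨l, hl⟩, ⟨j, hj⟩⟩ : κ)) (F c)
          = MvPolynomial.eval (pt (⟨⟨l, hl⟩, ⟨j, hj⟩⟩ : κ)) (F c) := by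
        rw [← MvPolynomial.coe_aeval_eq_eval]; rfl
      rw [hGeval]
      rw [haev] at this
      exact this
    have hG0 : G = 0 := by
      have hdegG : G.natDegree ≤ d := by
        refine (natDegree_mvaeval_le (F c) _ ?_).trans ?_
        · intro i
          refine (Polynomial.natDegree_add_le _ _).trans (max_le ?_ ?_)
          · simp
          · exact Polynomial.natDegree_mul_le.trans (by simp)
        · rw [Fintype.linearCombination_apply (R := ℝ) (v := mono)]
          refine MvPolynomial.totalDegree_finsetSum_le fun a _ => ?_
          refine (MvPolynomial.totalDegree_smul_le (R := ℝ) _ _).trans ?_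
          refine (MvPolynomial.totalDegree_monomial_le _ _).trans ?_
          rw [hesum a]
          have h1 := a.1.isLt
          have h2 := a.2.1.isLt
          have h3 := a.2.2.isLt
          omega
      refine Polynomial.eq_zero_of_natDegree_lt_card_of_eval_eq_zero' G
        ((Finset.range (d + 1)).image (Nat.cast : ℕ → ℝ)) ?_ ?_
      · intro i hi
        obtain ⟨j, hj, rfl⟩ := Finset.mem_image.mp hi
        exact hroots j (Finset.mem_range.mp hj)
      · rw [Finset.card_image_of_injective _ Nat.cast_injective, Finset.card_range]
        omega
    have := hGeval t
    rw [hG0] at this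
    simp only [Polynomial.eval_zero] at this
    rw [hxt, ← this]
end
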